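/- arXiv:1405.1812 — 2 statements merged into one kernel-verified Lean document; each statement's English description precedes it below -/
import Mathlib

section
/- For every finite simple graph G on n vertices, max{mp(G), α(G)} ≥ √n. -/
open SimpleGraph

/-- Degree of a vertex (as `ncard` of the neighbor set, avoiding decidability). -/
noncomputable def gdeg {V : Type*} (G : SimpleGraph V) (v : V) : ℕ := (G.neighborSet v).ncard

/-- A walk is degree-monotone if the degrees along its support are monotone. -/
def DegMonotone {V : Type*} (G : SimpleGraph V) {u v : V} (p : G.Walk u v) : Prop :=
  List.Chain' (· ≤ ·) (p.support.map (gdeg G)) ∨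
  List.Chain' (fun a b => b ≤ a) (p.support.map (gdeg G))

/-- `mp G`: the maximum number of vertices on a degree-monotone path of `G`. -/
noncomputable def mp {V : Type*} [Fintype V] (G : SimpleGraph V) : ℕ :=
  sSup {n | ∃ (u v : V) (p : G.Walk u v), p.IsPath ∧ DegMonotone G p ∧ p.support.length = n}

/-- The independence number: the maximum size of an independent set of vertices. -/
noncomputable def indepNum {V : Type*} [Fintype V] (G : SimpleGraph V) : ℕ :=
  sSup {n | ∃ s : Finset V, (∀ x ∈ s, ∀ y ∈ s, ¬ G.Adj x y) ∧ s.card = n}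

section Aux
variable {V : Type*} [Fintype V] (G : SimpleGraph V)

noncomputable def vidx : V → ℕ := fun v => (Fintype.equivFin V v : ℕ)

/-- strict order refining degree -/
def prec (u v : V) : Prop :=
  gdeg G u < gdeg G v ∨ (gdeg G u = gdeg G v ∧ vidx u < vidx v)

lemma prec_trans {u v w : V} (h1 : prec G u v) (h2 : prec G v w) : prec G u w := by
  rcases h1 with h1 | ⟨h1, h1'⟩ <;> rcases h2 with h2 | ⟨h2, h2'⟩
  · exact Or.inl (h1.trans h2)
  · exact Or.inl (h2 ▸ h1)
  · exact Or.inl (h1 ▸ h2)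
  · exact Or.inr ⟨h1.trans h2, h1'.trans h2'⟩

lemma prec_irrefl (v : V) : ¬ prec G v v := by
  rintro (h | ⟨-, h⟩) <;> exact lt_irrefl _ h

lemma prec_total {u v : V} (h : u ≠ v) : prec G u v ∨ prec G v u := by
  rcases lt_trichotomy (gdeg G u) (gdeg G v) with h1 | h1 | h1
  · exact Or.inl (Or.inl h1)
  · rcases lt_trichotomy (vidx u) (vidx v) with h2 | h2 | h2
    · exact Or.inl (Or.inr ⟨h1, h2⟩)
    · exact absurd ((Fintype.equivFin V).injective (Fin.val_injective h2)) h
    · exact Or.inr (Or.inr ⟨h1.symm, h2⟩)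
  · exact Or.inr (Or.inl h1)

lemma prec_deg_le {u v : V} (h : prec G u v) : gdeg G u ≤ gdeg G v := by
  rcases h with h | ⟨h, _⟩
  · exact h.le
  · exact h.le

/-- chain walks ending at v -/
def chainSet (v : V) : Set ℕ :=
  {n | ∃ u, ∃ p : G.Walk u v, List.Chain' (prec G) p.support ∧ p.support.length = n}

lemma chain_nodup {l : List V} (h : List.Chain' (prec G) l) : l.Nodup := by
  have : IsTrans V (prec G) := ⟨fun _ _ _ => prec_trans G⟩
  have hp := List.isChain_iff_pairwise.mp h
  exact hp.imp (fun hxy => by rintro rfl; exact prec_irrefl G _ hxy)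

lemma chainSet_mem_mpSet {v : V} {n : ℕ} (hn : n ∈ chainSet G v) :
    n ∈ {n | ∃ (u v : V) (p : G.Walk u v), p.IsPath ∧ DegMonotone G p ∧ p.support.length = n} := by
  obtain ⟨u, p, hc, hl⟩ := hn
  refine ⟨u, v, p, (p.isPath_def).mpr (chain_nodup G hc), ?_, hl⟩
  left
  show List.IsChain _ _
  rw [List.isChain_map]
  exact List.IsChain.imp (fun a b h => prec_deg_le G h) hc

lemma mpSet_bdd : BddAbove {n | ∃ (u v : V) (p : G.Walk u v),
    p.IsPath ∧ DegMonotone G p ∧ p.support.length = n} := by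
  refine ⟨Fintype.card V, ?_⟩
  rintro n ⟨u, v, p, hp, _, rfl⟩
  exact (p.isPath_def.mp hp).length_le_card

lemma chainSet_bdd (v : V) : BddAbove (chainSet G v) :=
  (mpSet_bdd G).mono (fun n hn => chainSet_mem_mpSet G hn)

lemma chainSet_nonempty (v : V) : (chainSet G v).Nonempty :=
  ⟨1, v, Walk.nil, List.isChain_singleton _, by simp⟩

noncomputable def fval (v : V) : ℕ := sSup (chainSet G v)

lemma one_le_fval (v : V) : 1 ≤ fval G v :=
  le_csSup (chainSet_bdd G v) ⟨v, Walk.nil, List.isChain_singleton _, by simp⟩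

lemma fval_le_mp (v : V) : fval G v ≤ mp G :=
  csSup_le (chainSet_nonempty G v) fun n hn => le_csSup (mpSet_bdd G) (chainSet_mem_mpSet G hn)

lemma fval_lt_of_adj {u v : V} (hadj : G.Adj u v) (hprec : prec G u v) :
    fval G u < fval G v := by
  obtain ⟨w, p, hc, hl⟩ := Nat.sSup_mem (chainSet_nonempty G u) (chainSet_bdd G u)
  have hmem : fval G u + 1 ∈ chainSet G v := by
    refine ⟨w, p.concat hadj, ?_, ?_⟩
    · show List.IsChain _ _
      rw [Walk.support_concat, List.isChain_append]
      refine ⟨hc, List.isChain_singleton _, ?_⟩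
      intro x hx y hy
      simp only [List.head?_cons, Option.mem_def, Option.some.injEq] at hy
      subst hy
      have hne : p.support ≠ [] := p.support_ne_nil
      rw [List.getLast?_eq_getLast hne, Option.mem_def, Option.some.injEq] at hx
      have hx' : x = u := by rw [← hx]; exact p.getLast_support
      subst hx'
      exact hprec
    · simp only [Walk.support_concat, List.length_append, List.length_singleton, hl]
      rfl
  have h1 := le_csSup (chainSet_bdd G v) hmem
  have h2 : fval G v = sSup (chainSet G v) := rfl
  omega

lemma fiber_indep (k : ℕ) :
    ∀ x ∈ Finset.univ.filter (fun v => fval G v = k),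
      ∀ y ∈ Finset.univ.filter (fun v => fval G v = k), ¬ G.Adj x y := by
  intro x hx y hy hadj
  simp only [Finset.mem_filter] at hx hy
  rcases prec_total G hadj.ne with h | h
  · exact absurd (fval_lt_of_adj G hadj h) (by omega)
  · exact absurd (fval_lt_of_adj G hadj.symm h) (by omega)

lemma indepNum_bdd : BddAbove {n | ∃ s : Finset V,
    (∀ x ∈ s, ∀ y ∈ s, ¬ G.Adj x y) ∧ s.card = n} := by
  refine ⟨Fintype.card V, ?_⟩
  rintro n ⟨s, _, rfl⟩
  exact s.card_le_univ.trans_eq (by simp)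

lemma card_le_mul : Fintype.card V ≤ mp G * _root_.indepNum G := by
  classical
  have hmaps : ∀ v ∈ (Finset.univ : Finset V), fval G v ∈ Finset.Icc 1 (mp G) := by
    intro v _
    exact Finset.mem_Icc.mpr ⟨one_le_fval G v, fval_le_mp G v⟩
  have hcard := Finset.card_eq_sum_card_fiberwise hmaps
  have hbound : ∀ k ∈ Finset.Icc 1 (mp G),
      (Finset.univ.filter (fun v => fval G v = k)).card ≤ _root_.indepNum G := by
    intro k _
    exact le_csSup (indepNum_bdd G) ⟨_, fiber_indep G k, rfl⟩
  calc Fintype.card V = ∑ k ∈ Finset.Icc 1 (mp G),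
        (Finset.univ.filter (fun v => fval G v = k)).card := by
        simpa using hcard
    _ ≤ (Finset.Icc 1 (mp G)).card • _root_.indepNum G := Finset.sum_le_card_nsmul _ _ _ hbound
    _ = mp G * _root_.indepNum G := by simp [Nat.card_Icc]

end Aux

/-- For every finite simple graph `G` on `n` vertices, `max {mp(G), α(G)} ≥ √n`. -/
theorem max_mp_indepNum_ge_sqrt {V : Type*} [Fintype V] (G : SimpleGraph V) :
    Real.sqrt (Fintype.card V) ≤ (max (mp G) (_root_.indepNum G) : ℝ) := by
  have h1 : Fintype.card V ≤ max (mp G) (_root_.indepNum G) * max (mp G) (_root_.indepNum G) :=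
    (card_le_mul G).trans (Nat.mul_le_mul (le_max_left _ _) (le_max_right _ _))
  have h2 : (Fintype.card V : ℝ) ≤ ((max (mp G) (_root_.indepNum G) : ℕ) : ℝ) ^ 2 := by
    rw [sq]
    exact_mod_cast h1
  calc Real.sqrt (Fintype.card V) ≤ Real.sqrt (((max (mp G) (_root_.indepNum G) : ℕ) : ℝ) ^ 2) :=
        Real.sqrt_le_sqrt h2
    _ = _ := by rw [Real.sqrt_sq (by positivity)]; push_cast; rfl
end

section
/- Let F_n (the fan) be the graph obtained from the cycle C_n (n ≥ 5) by adding all chords from one fixed vertex v. Then F_n is maximal outerplanar and mp(F_n) = n − 1. -/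
open SimpleGraph

/-- `IsMOP G`: `G` on `Fin n` is a triangulated polygon on the Hamiltonian cycle
`0 - 1 - ⋯ - (n-1) - 0`: it contains all cycle edges, no two of its edges cross,
and it has `2n - 3` edges (so all its inner faces are triangles). Every maximal
outerplanar graph on `n ≥ 3` vertices is isomorphic to such a graph. -/
structure IsMOP {n : ℕ} (G : SimpleGraph (Fin n)) : Prop where
  three_le : 3 ≤ n
  cycle : ∀ i j : Fin n, (j : ℕ) = ((i : ℕ) + 1) % n → G.Adj i j
  noncross : ∀ a b c d : Fin n, a < b → b < c → c < d → G.Adj a c → G.Adj b d → False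
  card_edges : G.edgeSet.ncard = 2 * n - 3

section Fan

variable {n : ℕ} {G : SimpleGraph (Fin n)}

private lemma mod_helper {x : ℕ} (hn : 0 < n) (hx : x < n) :
    (x + 1) % n = if x + 1 = n then 0 else x + 1 := by
  split
  · next h => rw [h, Nat.mod_self]
  · next h => exact Nat.mod_eq_of_lt (by omega)

/-- Build a walk out of a nonempty list whose consecutive elements are adjacent. -/
private lemma exists_walk_of_chain {V : Type*} (G : SimpleGraph V) :
    ∀ (l : List V), l ≠ [] → l.Chain' G.Adj →
      ∃ (u v : V) (p : G.Walk u v), p.support = l := by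
  intro l
  induction l with
  | nil => intro h; exact absurd rfl h
  | cons x t ih =>
    intro _ hc
    cases t with
    | nil => exact ⟨x, x, Walk.nil, rfl⟩
    | cons y s =>
      unfold List.Chain' at hc; rw [List.isChain_cons_cons] at hc
      obtain ⟨u, v, p, hp⟩ := ih (by simp) hc.2
      have hu : u = y := by
        have h1 := p.support_eq_cons
        rw [hp] at h1
        exact (List.cons.injEq _ _ _ _ ▸ h1).1.symm
      subst hu
      exact ⟨x, v, Walk.cons hc.1 p, by rw [Walk.support_cons, hp]⟩

variable (hn : 5 ≤ n)
  (hfan : ∀ i j : Fin n, G.Adj i j ↔ i ≠ j ∧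
    ((i : ℕ) = 0 ∨ (j : ℕ) = 0 ∨ (j : ℕ) = ((i : ℕ) + 1) % n ∨ (i : ℕ) = ((j : ℕ) + 1) % n))
include hn hfan

private lemma adj_iff (i j : Fin n) : G.Adj i j ↔ (i : ℕ) ≠ (j : ℕ) ∧
    ((i : ℕ) = 0 ∨ (j : ℕ) = 0 ∨ (j : ℕ) = (i : ℕ) + 1 ∨ (i : ℕ) = (j : ℕ) + 1) := by
  have hi := i.isLt
  have hj := j.isLt
  rw [hfan, mod_helper (by omega) hi, mod_helper (by omega) hj, Ne, Ne, Fin.ext_iff]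
  split_ifs <;> omega

private lemma ns_zero : G.neighborSet ⟨0, by omega⟩ = {(⟨0, by omega⟩ : Fin n)}ᶜ := by
  ext ⟨w, hw⟩
  simp only [mem_neighborSet, adj_iff hn hfan, Set.mem_compl_iff, Set.mem_singleton_iff,
    Fin.ext_iff, Fin.val_mk, ne_eq, eq_self_iff_true, true_or, and_true]
  omega

private lemma ns_one : G.neighborSet ⟨1, by omega⟩ =
    {(⟨0, by omega⟩ : Fin n), (⟨2, by omega⟩ : Fin n)} := by
  ext ⟨w, hw⟩
  simp only [mem_neighborSet, adj_iff hn hfan, Set.mem_insert_iff, Set.mem_singleton_iff,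
    Fin.ext_iff, Fin.val_mk, ne_eq]
  omega

private lemma ns_last : G.neighborSet ⟨n - 1, by omega⟩ =
    {(⟨0, by omega⟩ : Fin n), (⟨n - 2, by omega⟩ : Fin n)} := by
  ext ⟨w, hw⟩
  simp only [mem_neighborSet, adj_iff hn hfan, Set.mem_insert_iff, Set.mem_singleton_iff,
    Fin.ext_iff, Fin.val_mk, ne_eq]
  omega

private lemma ns_mid {v : ℕ} (h1 : 2 ≤ v) (h2 : v ≤ n - 2) : G.neighborSet ⟨v, by omega⟩ =
    {(⟨0, by omega⟩ : Fin n), (⟨v - 1, by omega⟩ : Fin n), (⟨v + 1, by omega⟩ : Fin n)} := by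
  ext ⟨w, hw⟩
  simp only [mem_neighborSet, adj_iff hn hfan, Set.mem_insert_iff, Set.mem_singleton_iff,
    Fin.ext_iff, Fin.val_mk, ne_eq]
  omega

private lemma gdeg_zero : gdeg G ⟨0, by omega⟩ = n - 1 := by
  rw [gdeg, ns_zero hn hfan, Set.compl_eq_univ_diff,
    Set.ncard_diff (Set.subset_univ _), Set.ncard_univ, Set.ncard_singleton,
    Nat.card_eq_fintype_card, Fintype.card_fin]

private lemma gdeg_one : gdeg G ⟨1, by omega⟩ = 2 := by
  rw [gdeg, ns_one hn hfan]
  exact Set.ncard_pair (by simp only [ne_eq, Fin.mk.injEq]; omega)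

private lemma gdeg_last : gdeg G ⟨n - 1, by omega⟩ = 2 := by
  rw [gdeg, ns_last hn hfan]
  exact Set.ncard_pair (by simp only [ne_eq, Fin.mk.injEq]; omega)

private lemma gdeg_mid {v : ℕ} (h1 : 2 ≤ v) (h2 : v ≤ n - 2) : gdeg G ⟨v, by omega⟩ = 3 := by
  rw [gdeg, ns_mid hn hfan h1 h2,
    Set.ncard_insert_of_notMem
      (by simp only [Set.mem_insert_iff, Set.mem_singleton_iff, Fin.mk.injEq]; omega)
      (Set.toFinite _),
    Set.ncard_pair (by simp only [ne_eq, Fin.mk.injEq]; omega)]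

private lemma gdeg_zero' {v : Fin n} (h : (v : ℕ) = 0) : gdeg G v = n - 1 := by
  obtain ⟨v, hv⟩ := v
  simp only [Fin.val_mk] at h
  subst h
  exact gdeg_zero hn hfan

private lemma gdeg_one' {v : Fin n} (h : (v : ℕ) = 1) : gdeg G v = 2 := by
  obtain ⟨v, hv⟩ := v
  simp only [Fin.val_mk] at h
  subst h
  exact gdeg_one hn hfan

private lemma gdeg_mid' {v : Fin n} (h1 : 2 ≤ (v : ℕ)) (h2 : (v : ℕ) ≤ n - 2) :
    gdeg G v = 3 := by
  obtain ⟨v, hv⟩ := v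
  simp only [Fin.val_mk] at h1 h2
  exact gdeg_mid hn hfan h1 h2

private lemma three_le_gdeg {v : Fin n} (hv1 : (v : ℕ) ≠ 1) (hv2 : (v : ℕ) ≠ n - 1) :
    3 ≤ gdeg G v := by
  obtain ⟨v, hv⟩ := v
  simp only [Fin.val_mk] at hv1 hv2
  rcases Nat.eq_zero_or_pos v with h | h
  · subst h
    rw [gdeg_zero hn hfan]
    omega
  · rw [gdeg_mid hn hfan (v := v) (by omega) (by omega)]

private lemma gdeg_le_two {v : Fin n} (h : gdeg G v ≤ 2) :
    (v : ℕ) = 1 ∨ (v : ℕ) = n - 1 := by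
  by_contra hc
  push_neg at hc
  have := three_le_gdeg hn hfan hc.1 hc.2
  omega

private lemma sum_gdeg : ∑ v : Fin n, gdeg G v = 4 * n - 6 := by
  classical
  set a : Fin n := ⟨0, by omega⟩ with ha
  set b : Fin n := ⟨1, by omega⟩ with hb
  set c : Fin n := ⟨n - 1, by omega⟩ with hc
  have h1 : ∑ v ∈ ({a, b, c} : Finset (Fin n)), gdeg G v = (n - 1) + 2 + 2 := by
    rw [Finset.sum_insert (by simp [ha, hb, hc, Fin.ext_iff]; omega),
      Finset.sum_insert (by simp [hb, hc, Fin.ext_iff]; omega),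
      Finset.sum_singleton, gdeg_zero hn hfan, gdeg_one hn hfan, gdeg_last hn hfan]
    omega
  have hcard : ({a, b, c} : Finset (Fin n)).card = 3 := by
    rw [Finset.card_insert_of_notMem (by simp [ha, hb, hc, Fin.ext_iff]; omega),
      Finset.card_insert_of_notMem (by simp [hb, hc, Fin.ext_iff]; omega),
      Finset.card_singleton]
  have h2 : ∑ v ∈ ({a, b, c} : Finset (Fin n))ᶜ, gdeg G v = 3 * (n - 3) := by
    rw [Finset.sum_congr rfl (g := fun _ => 3) ?_, Finset.sum_const, smul_eq_mul,
      Finset.card_compl, hcard, Fintype.card_fin, Nat.mul_comm]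
    intro v hv
    simp only [Finset.mem_compl, Finset.mem_insert, Finset.mem_singleton, ha, hb, hc,
      not_or, Fin.ext_iff, Fin.val_mk] at hv
    obtain ⟨v, hvlt⟩ := v
    simp only [Fin.val_mk] at hv
    exact gdeg_mid hn hfan (v := v) (by omega) (by omega)
  have := Finset.sum_add_sum_compl ({a, b, c} : Finset (Fin n)) (gdeg G)
  omega

private lemma edge_count : G.edgeSet.ncard = 2 * n - 3 := by
  classical
  have hdeg : ∀ v : Fin n, gdeg G v = G.degree v := by
    intro v
    rw [gdeg, ← card_neighborSet_eq_degree, Set.ncard_eq_toFinset_card', Set.toFinset_card]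
  have hsum := G.sum_degrees_eq_twice_card_edges
  have h4 : ∑ v : Fin n, G.degree v = 4 * n - 6 := by
    rw [← Finset.sum_congr rfl fun v _ => hdeg v]
    exact sum_gdeg hn hfan
  have hE : G.edgeSet.ncard = G.edgeFinset.card := by
    rw [Set.ncard_eq_toFinset_card', Set.toFinset_card, card_edgeSet]
  rw [hE]
  omega

private lemma fan_cycle : ∀ i j : Fin n, (j : ℕ) = ((i : ℕ) + 1) % n → G.Adj i j := by
  intro i j hj
  have hi := i.isLt
  have hjlt := j.isLt
  rw [mod_helper (by omega) hi] at hj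
  rw [adj_iff hn hfan]
  split_ifs at hj <;> omega

private lemma fan_noncross : ∀ a b c d : Fin n, a < b → b < c → c < d →
    G.Adj a c → G.Adj b d → False := by
  intro a b c d hab hbc hcd hac hbd
  rw [adj_iff hn hfan] at hac hbd
  rw [Fin.lt_iff_val_lt_val] at hab hbc hcd
  have := d.isLt
  omega

/-- The fan contains no degree-monotone (weakly increasing) Hamiltonian path. -/
private lemma no_ham (s : List (Fin n)) (hnd : s.Nodup) (hall : ∀ x, x ∈ s)
    (hchain : s.Chain' G.Adj) (hmono : List.Chain' (· ≤ ·) (s.map (gdeg G))) : False := by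
  have hlen : n ≤ s.length := by
    classical
    have : (Finset.univ : Finset (Fin n)).card ≤ s.toFinset.card :=
      Finset.card_le_card fun x _ => List.mem_toFinset.mpr (hall x)
    rw [List.toFinset_card_of_nodup hnd, Finset.card_univ, Fintype.card_fin] at this
    exact this
  -- s has at least 5 elements; look at its first two
  obtain ⟨x, s1, rfl⟩ : ∃ x s1, s = x :: s1 := by
    cases s with
    | nil => simp at hlen; omega
    | cons x t => exact ⟨x, t, rfl⟩
  obtain ⟨y, t, rfl⟩ : ∃ y t, s1 = y :: t := by
    cases s1 with
    | nil => simp at hlen; omega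
    | cons y t => exact ⟨y, t, rfl⟩
  set v1 : Fin n := ⟨1, by omega⟩ with hv1
  set v2 : Fin n := ⟨n - 1, by omega⟩ with hv2
  have hv12 : v1 ≠ v2 := by
    simp only [hv1, hv2, ne_eq, Fin.mk.injEq]
    omega
  -- pairwise monotonicity of degrees along s
  have hpw : (x :: y :: t).Pairwise (fun a b => gdeg G a ≤ gdeg G b) := by
    rw [← List.pairwise_map (f := gdeg G)]
    exact List.isChain_iff_pairwise.mp hmono
  have hxy : G.Adj x y := (List.isChain_cons_cons.mp hchain).1
  have hnd' := hnd
  rw [List.nodup_cons] at hnd'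
  obtain ⟨hxmem, hnd2⟩ := hnd'
  rw [List.nodup_cons] at hnd2
  obtain ⟨hymem, _⟩ := hnd2
  rw [List.pairwise_cons] at hpw
  obtain ⟨hx_le, hpw2⟩ := hpw
  rw [List.pairwise_cons] at hpw2
  obtain ⟨hy_le, _⟩ := hpw2
  -- any vertex of degree ≤ 2 is v1 or v2; any vertex in t forces x, y ∈ {v1, v2}
  have key : ∀ w : Fin n, w ∈ t → gdeg G w ≤ 2 → False := by
    intro w hw hdw
    have hxw : gdeg G x ≤ 2 := le_trans (hx_le w (by simp [hw])) hdw
    have hyw : gdeg G y ≤ 2 := le_trans (hy_le w hw) hdw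
    have hx2 := gdeg_le_two hn hfan hxw
    have hy2 := gdeg_le_two hn hfan hyw
    -- x and y are adjacent, but the only degree-≤2 vertices are v1, v2, non-adjacent
    have : ¬ G.Adj x y := by
      rw [adj_iff hn hfan]
      omega
    exact this hxy
  have h1 : v1 ∈ x :: y :: t := hall v1
  have h2 : v2 ∈ x :: y :: t := hall v2
  have hd1 : gdeg G v1 ≤ 2 := le_of_eq (gdeg_one hn hfan)
  have hd2 : gdeg G v2 ≤ 2 := le_of_eq (gdeg_last hn hfan)
  simp only [List.mem_cons] at h1 h2
  have hxy2 : ¬ G.Adj v1 v2 := by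
    rw [adj_iff hn hfan]
    simp only [hv1, hv2, Fin.val_mk]
    omega
  rcases h1 with h1 | h1 | h1
  · rcases h2 with h2 | h2 | h2
    · exact hv12 (h1.trans h2.symm)
    · exact hxy2 (by rw [h1, h2]; exact hxy)
    · exact key v2 h2 hd2
  · rcases h2 with h2 | h2 | h2
    · exact hxy2 (by rw [h1, h2]; exact G.adj_symm hxy)
    · exact hv12 (h1.trans h2.symm)
    · exact key v2 h2 hd2
  · exact key v1 h1 hd1

private lemma mp_lower :
    ∃ (u v : Fin n) (p : G.Walk u v), p.IsPath ∧ DegMonotone G p ∧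
      p.support.length = n - 1 := by
  -- the path 1, 2, …, n-2, 0
  set f : ℕ → Fin n := fun k =>
    ⟨(k + 1) % (n - 1), lt_of_lt_of_le (Nat.mod_lt _ (by omega)) (by omega)⟩ with hf
  have hfval : ∀ k, k < n - 1 → ((f k : Fin n) : ℕ) = if k = n - 2 then 0 else k + 1 := by
    intro k hk
    simp only [hf, Fin.val_mk]
    split
    · next h => rw [h, show n - 2 + 1 = n - 1 by omega, Nat.mod_self]
    · next h => exact Nat.mod_eq_of_lt (by omega)
  set l : List (Fin n) := (List.range (n - 1)).map f with hl
  have hlen : l.length = n - 1 := by simp [hl]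
  have hlne : l ≠ [] := by
    intro h
    rw [h] at hlen
    simp at hlen
    omega
  have hchain : l.Chain' G.Adj := by
    unfold List.Chain'; rw [hl, List.isChain_map, show n - 1 = (n - 2) + 1 by omega, List.isChain_range_succ]
    intro m hm
    rw [adj_iff hn hfan, hfval m (by omega), hfval (m + 1) (by omega)]
    split_ifs <;> omega
  have hnd : l.Nodup := by
    rw [hl]
    refine List.Nodup.map_on ?_ List.nodup_range
    intro k hk k' hk' hkk'
    rw [List.mem_range] at hk hk'
    have e1 : (if k = n - 2 then 0 else k + 1) = (if k' = n - 2 then 0 else k' + 1) := by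
      rw [← hfval k hk, ← hfval k' hk', hkk']
    split_ifs at e1 <;> omega
  obtain ⟨u, v, p, hp⟩ := exists_walk_of_chain G l hlne hchain
  refine ⟨u, v, p, ?_, ?_, ?_⟩
  · rw [Walk.isPath_def, hp]; exact hnd
  · left
    unfold List.Chain'; rw [hp, hl, List.map_map, List.isChain_map, show n - 1 = (n - 2) + 1 by omega,
      List.isChain_range_succ]
    intro m hm
    simp only [Function.comp_apply]
    have d1 := hfval m (by omega)
    have d2 := hfval (m + 1) (by omega)
    rw [if_neg (by omega : ¬ m = n - 2)] at d1
    have hL : gdeg G (f m) = if m = 0 then 2 else 3 := by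
      split
      · next h => exact gdeg_one' hn hfan (by rw [d1]; omega)
      · next h => exact gdeg_mid' hn hfan (by rw [d1]; omega) (by rw [d1]; omega)
    have hR : gdeg G (f (m + 1)) = if m + 1 = n - 2 then n - 1 else 3 := by
      split
      · next h =>
        rw [if_pos h] at d2
        exact gdeg_zero' hn hfan d2
      · next h =>
        rw [if_neg h] at d2
        exact gdeg_mid' hn hfan (by rw [d2]; omega) (by rw [d2]; omega)
    rw [hL, hR]
    split_ifs <;> omega
  · rw [hp, hlen]

end Fan

/-- The fan `F_n` (`n ≥ 5`), the cycle `C_n` together with all chords from the fixed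
vertex `0`, is maximal outerplanar and satisfies `mp(F_n) = n − 1`. -/
theorem fan_is_mop_and_mp {n : ℕ} (hn : 5 ≤ n) (G : SimpleGraph (Fin n))
    (hfan : ∀ i j : Fin n, G.Adj i j ↔ i ≠ j ∧
      ((i : ℕ) = 0 ∨ (j : ℕ) = 0 ∨ (j : ℕ) = ((i : ℕ) + 1) % n ∨ (i : ℕ) = ((j : ℕ) + 1) % n)) :
    IsMOP G ∧ mp G = n - 1 := by
  constructor
  · exact ⟨by omega, fan_cycle hn hfan, fan_noncross hn hfan, edge_count hn hfan⟩
  · have hmem : (n - 1) ∈ {k | ∃ (u v : Fin n) (p : G.Walk u v),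
        p.IsPath ∧ DegMonotone G p ∧ p.support.length = k} := mp_lower hn hfan
    have hub : ∀ k ∈ {k | ∃ (u v : Fin n) (p : G.Walk u v),
        p.IsPath ∧ DegMonotone G p ∧ p.support.length = k}, k ≤ n - 1 := by
      rintro k ⟨u, v, p, hpath, hmono, hk⟩
      have hnd : p.support.Nodup := p.isPath_def.mp hpath
      have hle : p.support.length ≤ n := by
        have := List.Nodup.length_le_card hnd
        simpa using this
      rcases Nat.lt_or_ge k n with h | h
      · omega
      · -- k = n: Hamiltonian path, contradiction
        exfalso
        have hkn : p.support.length = n := by omega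
        have hall : ∀ x, x ∈ p.support := by
          intro x
          classical
          have h1 : p.support.toFinset.card = n := by
            rw [List.toFinset_card_of_nodup hnd, hkn]
          have h2 : p.support.toFinset = Finset.univ :=
            Finset.eq_univ_of_card _ (by rw [h1, Fintype.card_fin])
          rw [← List.mem_toFinset, h2]
          exact Finset.mem_univ x
        rcases hmono with hmono | hmono
        · exact no_ham hn hfan p.support hnd hall p.isChain_adj_support hmono
        · refine no_ham hn hfan p.support.reverse (List.nodup_reverse.mpr hnd) (by simp [hall])
            ?_ ?_
          · unfold List.Chain'; rw [List.isChain_reverse]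
            exact List.IsChain.imp (fun a b h => G.adj_symm h) p.isChain_adj_support
          · unfold List.Chain'; rw [List.map_reverse, List.isChain_reverse]
            exact hmono
    exact le_antisymm (csSup_le ⟨n - 1, hmem⟩ hub) (le_csSup ⟨n - 1, hub⟩ hmem)
end
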